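/- Let A ∈ ℝ^{n×n}, V ∈ ℝ^{n×N}, T ∈ ℝ^{N×N}, and W ∈ ℝ^{n×N} satisfy A·V = V·T + W. Let E₁ ∈ ℝ^{N×p} denote the first p columns of the N×N identity matrix, let Γ ∈ ℝ^{p×p}, and set V₁ := V·E₁. Let μ₂(A) denote the largest eigenvalue of (A + Aᵀ)/2 and assume μ₂(A) < 0. Then ‖exp(A)·V₁·Γ − V·exp(T)·E₁·Γ‖₂ ≤ C · (1 − e^{μ₂(A)})/(−μ₂(A)), where C := sup_{λ ∈ [0,1]} ‖W·exp(λT)·E₁·Γ‖₂. -/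

import Mathlib

open Matrix

/-- The `N × q` matrix consisting of the first `q` columns of the `N × N` identity matrix. -/
def firstCols (N q : ℕ) : Matrix (Fin N) (Fin q) ℝ :=
  Matrix.of fun i j => if (i : ℕ) = (j : ℕ) then 1 else 0

/-- The spectral norm of a (rectangular) real matrix: the operator norm of the induced
linear map between Euclidean spaces. -/
noncomputable def specNorm {a b : ℕ} (M : Matrix (Fin a) (Fin b) ℝ) : ℝ :=
  ‖LinearMap.toContinuousLinearMap (Matrix.toEuclideanLin M)‖

open NormedSpace

set_option maxHeartbeats 1000000

local notation "⟪" x ", " y "⟫_ℝ" => @inner ℝ _ _ x y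

noncomputable def LM {a b : ℕ} (M : Matrix (Fin a) (Fin b) ℝ) :
    EuclideanSpace ℝ (Fin b) →L[ℝ] EuclideanSpace ℝ (Fin a) :=
  LinearMap.toContinuousLinearMap (Matrix.toEuclideanLin M)

lemma LM_mul {a b c : ℕ} (M : Matrix (Fin a) (Fin b) ℝ) (P : Matrix (Fin b) (Fin c) ℝ) :
    LM (M * P) = (LM M).comp (LM P) := by
  ext x
  simp [LM, Matrix.toEuclideanLin_eq_toLin, Matrix.toLin_mul _ (PiLp.basisFun 2 ℝ (Fin b)) _]

lemma LM_add {a b : ℕ} (M P : Matrix (Fin a) (Fin b) ℝ) : LM (M + P) = LM M + LM P := by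
  ext x; simp [LM]

lemma LM_sub {a b : ℕ} (M P : Matrix (Fin a) (Fin b) ℝ) : LM (M - P) = LM M - LM P := by
  ext x; simp [LM]

lemma LM_smul {a b : ℕ} (c : ℝ) (M : Matrix (Fin a) (Fin b) ℝ) : LM (c • M) = c • LM M := by
  ext x; simp [LM]

noncomputable def LMa (m : ℕ) :
    Matrix (Fin m) (Fin m) ℝ ≃ₐ[ℝ] (EuclideanSpace ℝ (Fin m) →L[ℝ] EuclideanSpace ℝ (Fin m)) :=
  AlgEquiv.ofLinearEquiv
    ((Matrix.toEuclideanLin :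
        Matrix (Fin m) (Fin m) ℝ ≃ₗ[ℝ] _).trans LinearMap.toContinuousLinearMap)
    (by ext x; simp [Matrix.toEuclideanLin_eq_toLin])
    (by
      intro M P
      ext x
      simp [Matrix.toEuclideanLin_eq_toLin, Matrix.toLin_mul _ (PiLp.basisFun 2 ℝ (Fin m)) _,
        ContinuousLinearMap.mul_apply])

attribute [local instance] Matrix.linftyOpNormedRing Matrix.linftyOpNormedAlgebra

lemma LM_exp {m : ℕ} (M : Matrix (Fin m) (Fin m) ℝ) :
    LM (exp M) = exp (LM M) := by
  have h : Continuous (LMa m) := (LMa m).toLinearMap.continuous_of_finiteDimensional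
  exact map_exp (LMa m) h M


lemma specNorm_LM {a b : ℕ} (M : Matrix (Fin a) (Fin b) ℝ) : specNorm M = ‖LM M‖ := rfl

lemma rayleigh_le {m : ℕ} (hm : 0 < m) (S : Matrix (Fin m) (Fin m) ℝ) (hS : S.IsHermitian)
    (y : EuclideanSpace ℝ (Fin m)) :
    ⟪LM S y, y⟫_ℝ ≤ (⨆ i, hS.eigenvalues i) * ‖y‖ ^ 2 := by
  haveI : Nonempty (Fin m) := ⟨⟨0, hm⟩⟩
  set b := hS.eigenvectorBasis with hb
  set μ := ⨆ i, hS.eigenvalues i with hμ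
  have hsym : (Matrix.toEuclideanLin S).IsSymmetric := (Matrix.isHermitian_iff_isSymmetric).1 hS
  have hbv : ∀ i, LM S (b i) = hS.eigenvalues i • b i := by
    intro i
    have := hS.mulVec_eigenvectorBasis i
    ext j
    have hj := congrFun this j
    simpa [LM, Matrix.toEuclideanLin_apply] using hj
  have key : ⟪LM S y, y⟫_ℝ = ∑ i, hS.eigenvalues i * (⟪b i, y⟫_ℝ)^2 := by
    rw [← b.sum_inner_mul_inner (LM S y) y]
    congr 1; ext i
    have h1 : ⟪LM S y, b i⟫_ℝ = ⟪y, LM S (b i)⟫_ℝ := by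
      have := hsym y (b i)
      simpa [LM] using this
    rw [h1, hbv i, inner_smul_right, real_inner_comm y (b i)]
    ring
  have hle : ∀ i, hS.eigenvalues i ≤ μ := fun i =>
    le_ciSup (Set.Finite.bddAbove (Set.finite_range _)) i
  calc ⟪LM S y, y⟫_ℝ = ∑ i, hS.eigenvalues i * (⟪b i, y⟫_ℝ)^2 := key
    _ ≤ ∑ i, μ * (⟪b i, y⟫_ℝ)^2 := by
        apply Finset.sum_le_sum
        intro i _
        exact mul_le_mul_of_nonneg_right (hle i) (sq_nonneg _)
    _ = μ * ∑ i, (⟪b i, y⟫_ℝ)^2 := by rw [Finset.mul_sum]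
    _ = μ * ‖y‖ ^ 2 := by
        congr 1
        have := b.sum_inner_mul_inner y y
        rw [real_inner_self_eq_norm_sq] at this
        rw [← this]
        congr 1; ext i
        rw [real_inner_comm y (b i)]; ring


lemma inner_LM_le {m : ℕ} (hm : 0 < m) (A : Matrix (Fin m) (Fin m) ℝ)
    (hA : ((1 / 2 : ℝ) • (A + Aᵀ)).IsHermitian) (y : EuclideanSpace ℝ (Fin m)) :
    ⟪LM A y, y⟫_ℝ ≤ (⨆ i, hA.eigenvalues i) * ‖y‖ ^ 2 := by
  have h := rayleigh_le hm _ hA y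
  have hct : Aᵀ = Aᴴ := by
    ext i j; simp [Matrix.conjTranspose_apply]
  have hadj2 : Matrix.toEuclideanLin Aᵀ = LinearMap.adjoint (Matrix.toEuclideanLin A) := by
    rw [hct]; exact Matrix.toEuclideanLin_conjTranspose_eq_adjoint A
  have htr : ⟪LM Aᵀ y, y⟫_ℝ = ⟪LM A y, y⟫_ℝ := by
    have h1 : LM Aᵀ y = LinearMap.adjoint (Matrix.toEuclideanLin A) y := by
      simp only [LM, LinearMap.coe_toContinuousLinearMap', hadj2]
    rw [h1, LinearMap.adjoint_inner_left, real_inner_comm]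
    rfl
  have hexp : ⟪LM ((1 / 2 : ℝ) • (A + Aᵀ)) y, y⟫_ℝ = ⟪LM A y, y⟫_ℝ := by
    have hLM : LM ((1 / 2 : ℝ) • (A + Aᵀ)) y = (1/2 : ℝ) • (LM A y + LM Aᵀ y) := by
      simp [LM]
    rw [hLM, real_inner_smul_left, inner_add_left, htr]
    ring
  linarith [hexp ▸ h]

lemma exp_opNorm_le {m : ℕ} (hm : 0 < m) (A : Matrix (Fin m) (Fin m) ℝ)
    (hA : ((1 / 2 : ℝ) • (A + Aᵀ)).IsHermitian) (s : ℝ) (hs : 0 ≤ s) :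
    ‖exp (s • LM A)‖ ≤ Real.exp (s * (⨆ i, hA.eigenvalues i)) := by
  set a := LM A with ha
  set μ := ⨆ i, hA.eigenvalues i with hμdef
  refine ContinuousLinearMap.opNorm_le_bound _ (Real.exp_nonneg _) (fun x => ?_)
  set u : ℝ → EuclideanSpace ℝ (Fin m) := fun t => exp (t • a) x with hudef
  have hu : ∀ t, HasDerivAt u (a (u t)) t := by
    intro t
    have h1 := hasDerivAt_exp_smul_const' (𝕂 := ℝ) a t
    have h2 := h1.clm_apply (hasDerivAt_const t x)
    simpa [ContinuousLinearMap.mul_apply] using h2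
  set ψ : ℝ → ℝ := fun t => ⟪u t, u t⟫_ℝ with hψdef
  have hψ : ∀ t, HasDerivAt ψ (2 * ⟪a (u t), u t⟫_ℝ) t := by
    intro t
    have h2 := (hu t).inner ℝ (hu t)
    exact h2.congr_deriv (by rw [two_mul, real_inner_comm])
  set h : ℝ → ℝ := fun t => Real.exp (-(2 * μ) * t) * ψ t with hhdef
  have hh : ∀ t, HasDerivAt h
      (Real.exp (-(2 * μ) * t) * (2 * ⟪a (u t), u t⟫_ℝ)
        + (-(2 * μ) * Real.exp (-(2 * μ) * t)) * ψ t) t := by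
    intro t
    have he : HasDerivAt (fun t => Real.exp (-(2 * μ) * t))
        (-(2 * μ) * Real.exp (-(2 * μ) * t)) t := by
      have h3 := (((hasDerivAt_id t).const_mul (-(2 * μ)))).exp
      simpa [mul_comm] using h3
    have h4 := he.mul (hψ t)
    exact h4.congr_deriv (by ring)
  have hψnorm : ∀ t, ψ t = ‖u t‖ ^ 2 := fun t => real_inner_self_eq_norm_sq (u t)
  have hderiv_nonpos : ∀ t, deriv h t ≤ 0 := by
    intro t
    rw [(hh t).deriv]
    have hb : ⟪a (u t), u t⟫_ℝ ≤ μ * ψ t := by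
      rw [hψnorm t]; exact inner_LM_le hm A hA (u t)
    have hE := Real.exp_pos (-(2 * μ) * t)
    nlinarith [mul_le_mul_of_nonneg_left hb hE.le]
  have hanti : Antitone h :=
    antitone_of_deriv_nonpos (fun t => (hh t).differentiableAt) hderiv_nonpos
  have h0 : h 0 = ‖x‖ ^ 2 := by
    have hu0 : u 0 = x := by
      have : ((0:ℝ) • a) = 0 := by ext y; simp
      show exp ((0:ℝ) • a) x = x
      rw [this, exp_zero, ContinuousLinearMap.one_apply]
    simp [hhdef, hψnorm 0, hu0]
  have hs' : h s ≤ ‖x‖ ^ 2 := h0 ▸ hanti hs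
  have hψs : ψ s ≤ Real.exp (2 * μ * s) * ‖x‖ ^ 2 := by
    have hE := Real.exp_pos (2 * μ * s)
    have h2 := mul_le_mul_of_nonneg_left hs' hE.le
    calc ψ s = Real.exp (2 * μ * s) * (Real.exp (-(2 * μ) * s) * ψ s) := by
          rw [← mul_assoc, ← Real.exp_add, show 2*μ*s + -(2*μ)*s = 0 by ring,
            Real.exp_zero, one_mul]
      _ ≤ Real.exp (2 * μ * s) * ‖x‖ ^ 2 := h2
  have h1 : ‖u s‖ ^ 2 ≤ (Real.exp (s * μ) * ‖x‖) ^ 2 := by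
    have he2 : (Real.exp (s * μ)) ^ 2 = Real.exp (2 * μ * s) := by
      rw [sq, ← Real.exp_add]; ring_nf
    rw [mul_pow, he2, ← hψnorm s]
    exact hψs
  have := (pow_le_pow_iff_left₀ (norm_nonneg _)
    (mul_nonneg (Real.exp_nonneg _) (norm_nonneg _)) (two_ne_zero)).1 h1
  exact this


theorem exp_approximation_error_bound
    (n p N : ℕ) (hn : 0 < n) (hp : 0 < p) (hN : 0 < N)
    (A : Matrix (Fin n) (Fin n) ℝ)
    (V W : Matrix (Fin n) (Fin N) ℝ)
    (T : Matrix (Fin N) (Fin N) ℝ)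
    (hdec : A * V = V * T + W)
    (Γ : Matrix (Fin p) (Fin p) ℝ)
    (hA : ((1 / 2 : ℝ) • (A + Aᵀ)).IsHermitian)
    (hμ : (⨆ i, hA.eigenvalues i) < 0) :
    specNorm (NormedSpace.exp A * (V * firstCols N p) * Γ
        - V * NormedSpace.exp T * firstCols N p * Γ)
      ≤ (⨆ l : Set.Icc (0 : ℝ) 1,
            specNorm (W * NormedSpace.exp ((l : ℝ) • T) * firstCols N p * Γ))
          * ((1 - Real.exp (⨆ i, hA.eigenvalues i)) / (-(⨆ i, hA.eigenvalues i))) := by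
  have exp_opNorm_le : ∀ (s : ℝ), 0 ≤ s →
      ‖exp (s • LM A)‖ ≤ Real.exp (s * (⨆ i, hA.eigenvalues i)) :=
    fun s hs => exp_opNorm_le hn A hA s hs
  set μ := ⨆ i, hA.eigenvalues i with hμdef
  set la := LM A with hla
  set lv := LM V with hlv
  set lw := LM W with hlw
  set lt := LM T with hlt
  set r : EuclideanSpace ℝ (Fin p) →L[ℝ] EuclideanSpace ℝ (Fin N) :=
    (LM (firstCols N p)).comp (LM Γ) with hr
  have hL : la.comp lv = lv.comp lt + lw := by
    have h := congrArg LM hdec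
    rwa [LM_mul, LM_add, LM_mul] at h
  -- the path
  set g : ℝ → (EuclideanSpace ℝ (Fin p) →L[ℝ] EuclideanSpace ℝ (Fin n)) :=
    fun s => (exp ((1 - s) • la)).comp (lv.comp ((exp (s • lt)).comp r)) with hg
  set G' : ℝ → (EuclideanSpace ℝ (Fin p) →L[ℝ] EuclideanSpace ℝ (Fin n)) :=
    fun s => -((exp ((1 - s) • la)).comp (lw.comp ((exp (s • lt)).comp r))) with hG'
  have hgderiv : ∀ s : ℝ, HasDerivAt g (G' s) s := by
    intro s
    have hc : HasDerivAt (fun s : ℝ => exp ((1 - s) • la))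
        (-(la * exp ((1 - s) • la))) s := by
      have h1 := hasDerivAt_exp_smul_const' (𝕂 := ℝ) la (1 - s)
      have h2 : HasDerivAt (fun s : ℝ => 1 - s) (-1) s := by
        exact (hasDerivAt_id' s).const_sub 1
      have h3 := h1.scomp s h2
      exact h3.congr_deriv (by rw [neg_one_smul])
    have hd : HasDerivAt (fun s : ℝ => lv.comp ((exp (s • lt)).comp r))
        (lv.comp ((lt * exp (s • lt)).comp r)) s := by
      have h1 : HasDerivAt (fun s : ℝ => exp (s • lt)) (lt * exp (s • lt)) s :=
        hasDerivAt_exp_smul_const' (𝕂 := ℝ) lt s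
      have h2 := h1.clm_comp (hasDerivAt_const s r)
      have h3 := (hasDerivAt_const s lv).clm_comp h2
      simpa using h3
    have h4 := hc.clm_comp hd
    have hcomm : la * exp ((1 - s) • la) = exp ((1 - s) • la) * la := by
      have hu1 : HasDerivAt (fun u : ℝ => exp (u • la)) (exp ((1 - s) • la) * la) (1 - s) :=
        hasDerivAt_exp_smul_const (𝕂 := ℝ) la (1 - s)
      have hu2 : HasDerivAt (fun u : ℝ => exp (u • la)) (la * exp ((1 - s) • la)) (1 - s) :=
        hasDerivAt_exp_smul_const' (𝕂 := ℝ) la (1 - s)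
      exact hu2.unique hu1
    convert h4 using 1
    have hz : ∀ x, la (lv (exp (s • lt) (r x)))
        = lv (lt (exp (s • lt) (r x))) + lw (exp (s • lt) (r x)) := by
      intro x
      have := congrArg (fun f => f (exp (s • lt) (r x))) hL
      simpa using this
    rw [hcomm]
    ext x
    simp only [ContinuousLinearMap.coe_comp', Function.comp_apply,
      ContinuousLinearMap.neg_apply, ContinuousLinearMap.add_apply,
      ContinuousLinearMap.mul_apply]
    rw [hz x]
    simp only [map_add, ContinuousLinearMap.smul_apply, ContinuousLinearMap.neg_apply,
      PiLp.add_apply, PiLp.neg_apply, PiLp.smul_apply, smul_eq_mul, hG',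
      ContinuousLinearMap.coe_comp', Function.comp_apply]
    ring
  -- continuity of G'
  have hce2 : Continuous fun s : ℝ => exp (s • lt) :=
    continuous_iff_continuousAt.2 fun s => (hasDerivAt_exp_smul_const' (𝕂 := ℝ) lt s).continuousAt
  have hce1 : Continuous fun s : ℝ => exp ((1 - s) • la) :=
    (continuous_iff_continuousAt.2 fun s =>
      (hasDerivAt_exp_smul_const' (𝕂 := ℝ) la s).continuousAt).comp (continuous_const.sub continuous_id)
  have hcG : Continuous G' := by
    rw [hG']
    exact (hce1.clm_comp (continuous_const.clm_comp (hce2.clm_comp continuous_const))).neg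
  have hint : (∫ s in (0:ℝ)..1, G' s) = g 1 - g 0 :=
    intervalIntegral.integral_eq_sub_of_hasDerivAt (fun s _ => hgderiv s)
      (hcG.intervalIntegrable 0 1)
  set C := ⨆ l : Set.Icc (0:ℝ) 1,
    specNorm (W * exp ((l:ℝ) • T) * firstCols N p * Γ) with hC
  have hYeq : ∀ t : ℝ, lw.comp ((exp (t • lt)).comp r)
      = LM (W * exp (t • T) * firstCols N p * Γ) := by
    intro t
    have hh1 : LM (exp (t • T)) = exp (t • lt) := by rw [LM_exp, LM_smul]
    rw [LM_mul, LM_mul, LM_mul, hh1, hr]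
    ext x
    simp [ContinuousLinearMap.coe_comp', Function.comp_apply, hlw]
  have hcont : Continuous fun l : Set.Icc (0:ℝ) 1 =>
      specNorm (W * exp ((l:ℝ) • T) * firstCols N p * Γ) := by
    have heq : (fun l : Set.Icc (0:ℝ) 1 =>
        specNorm (W * exp ((l:ℝ) • T) * firstCols N p * Γ))
        = fun l : Set.Icc (0:ℝ) 1 => ‖lw.comp ((exp ((l:ℝ) • lt)).comp r)‖ := by
      funext l
      rw [specNorm_LM, hYeq]
    rw [heq]
    exact (continuous_const.clm_comp
      ((hce2.comp continuous_subtype_val).clm_comp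
        continuous_const)).norm
  have hbdd : BddAbove (Set.range fun l : Set.Icc (0:ℝ) 1 =>
      specNorm (W * exp ((l:ℝ) • T) * firstCols N p * Γ)) :=
    (isCompact_range hcont).bddAbove
  have hCle : ∀ t, ∀ ht : t ∈ Set.Icc (0:ℝ) 1, ‖lw.comp ((exp (t • lt)).comp r)‖ ≤ C := by
    intro t ht
    have h1 := le_ciSup hbdd (⟨t, ht⟩ : Set.Icc (0:ℝ) 1)
    rw [specNorm_LM, ← hYeq t] at h1
    exact h1
  have hbound : ∀ t ∈ Set.Ioc (0:ℝ) 1, ‖G' t‖ ≤ C * Real.exp ((1 - t) * μ) := by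
    intro t ht
    rw [hG']
    show ‖-((exp ((1 - t) • la)).comp (lw.comp ((exp (t • lt)).comp r)))‖ ≤ _
    rw [norm_neg]
    calc ‖(exp ((1 - t) • la)).comp (lw.comp ((exp (t • lt)).comp r))‖
        ≤ ‖exp ((1 - t) • la)‖ * ‖lw.comp ((exp (t • lt)).comp r)‖ :=
          ContinuousLinearMap.opNorm_comp_le _ _
      _ ≤ Real.exp ((1 - t) * μ) * C :=
          mul_le_mul (exp_opNorm_le (1 - t) (by linarith [ht.2]))
            (hCle t ⟨ht.1.le, ht.2⟩) (norm_nonneg _) (Real.exp_nonneg _)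
      _ = C * Real.exp ((1 - t) * μ) := mul_comm _ _
  have hC0 : 0 ≤ C :=
    le_trans (norm_nonneg _) (hCle 0 ⟨le_refl _, zero_le_one⟩)
  have hintnn : (0:ℝ) ≤ ∫ s in (0:ℝ)..1, C * Real.exp ((1 - s) * μ) := by
    apply intervalIntegral.integral_nonneg zero_le_one
    intro u _
    positivity
  have hnormint : ‖∫ s in (0:ℝ)..1, G' s‖ ≤ ∫ s in (0:ℝ)..1, C * Real.exp ((1 - s) * μ) := by
    rw [← abs_of_nonneg hintnn]
    apply intervalIntegral.norm_integral_le_abs_of_norm_le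
    · filter_upwards [MeasureTheory.ae_restrict_mem measurableSet_uIoc] with t ht
      have ht' : t ∈ Set.Ioc (0:ℝ) 1 := by
        rwa [Set.uIoc_of_le (zero_le_one)] at ht
      exact hbound t ht'
    · exact (continuous_const.mul (Real.continuous_exp.comp
        ((continuous_const.sub continuous_id).mul continuous_const))).intervalIntegrable 0 1
  have hμne : μ ≠ 0 := ne_of_lt hμ
  have hF : ∀ s : ℝ, HasDerivAt (fun s => -(1/μ) * Real.exp ((1 - s) * μ))
      (Real.exp ((1 - s) * μ)) s := by
    intro s
    have h1 : HasDerivAt (fun s : ℝ => (1 - s) * μ) (-μ) s := by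
      have := ((hasDerivAt_const s (1:ℝ)).sub (hasDerivAt_id s)).mul_const μ
      simpa using this
    have h2 := h1.exp
    have h3 := h2.const_mul (-(1/μ))
    exact h3.congr_deriv (by field_simp)
  have hival : (∫ s in (0:ℝ)..1, Real.exp ((1 - s) * μ)) = (1 - Real.exp μ) / (-μ) := by
    rw [intervalIntegral.integral_eq_sub_of_hasDerivAt (fun s _ => hF s)
      ((Real.continuous_exp.comp
        ((continuous_const.sub continuous_id).mul continuous_const)).intervalIntegrable 0 1)]
    have h1 : ((1:ℝ)-1)*μ = 0 := by ring
    have h0 : ((1:ℝ)-0)*μ = μ := by ring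
    rw [h1, h0, Real.exp_zero]
    field_simp [hμne]
    ring
  have htarget : LM (exp A * (V * firstCols N p) * Γ - V * exp T * firstCols N p * Γ)
      = g 0 - g 1 := by
    have hz1 : ((1:ℝ) - 1) • la = 0 := by ext y; simp
    have hz0 : ((0:ℝ)) • lt = 0 := by ext y; simp
    have hs0 : ((1:ℝ) - 0) • la = (1:ℝ) • la := by norm_num
    have hone : ((1:ℝ)) • la = la := by ext y; simp
    have honet : ((1:ℝ)) • lt = lt := by ext y; simp
    have hg0 : g 0 = (exp la).comp (lv.comp ((LM (firstCols N p)).comp (LM Γ))) := by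
      rw [hg]
      show (exp ((1 - 0) • la)).comp (lv.comp ((exp ((0:ℝ) • lt)).comp r)) = _
      rw [hs0, hone, hz0, exp_zero, hr]
      ext x
      simp [ContinuousLinearMap.coe_comp', Function.comp_apply]
    have hg1 : g 1 = (lv.comp ((exp lt).comp ((LM (firstCols N p)).comp (LM Γ)))) := by
      rw [hg]
      show (exp ((1 - 1) • la)).comp (lv.comp ((exp ((1:ℝ) • lt)).comp r)) = _
      rw [hz1, honet, exp_zero, hr]
      ext x
      simp [ContinuousLinearMap.coe_comp', Function.comp_apply]
    rw [LM_sub, LM_mul, LM_mul, LM_mul, LM_mul, LM_mul, LM_mul, LM_exp, LM_exp, hg0, hg1]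
    ext x
    simp [ContinuousLinearMap.coe_comp', Function.comp_apply, hla, hlv, hlt]
  calc specNorm (exp A * (V * firstCols N p) * Γ - V * exp T * firstCols N p * Γ)
      = ‖g 0 - g 1‖ := by rw [specNorm_LM, htarget]
    _ = ‖g 1 - g 0‖ := norm_sub_rev _ _
    _ = ‖∫ s in (0:ℝ)..1, G' s‖ := by rw [hint]
    _ ≤ ∫ s in (0:ℝ)..1, C * Real.exp ((1 - s) * μ) := hnormint
    _ = C * ((1 - Real.exp μ) / (-μ)) := by
        rw [intervalIntegral.integral_const_mul, hival]
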